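/- Let G be a graph, v a vertex, and let S be a vertex-ℓ-triangle 2-club with S ⊆ N[v] and v ∈ S. Then the iterative deletion procedure on G[N[v]] that repeatedly removes a vertex lying in fewer than ℓ triangles of the current graph never deletes any vertex of S. -/
import Mathlib


open Finset

variable {V : Type*}

/-- `S` is a 2-club. -/
def IsTwoClub (G : SimpleGraph V) (S : Finset V) : Prop :=
  ∀ u ∈ S, ∀ w ∈ S, ∃ p : G.Walk u w, p.length ≤ 2 ∧ ∀ x ∈ p.support, x ∈ S

/-- The number of triangles of `G[S]` containing `v`. -/
def triCountIn [Fintype V] [DecidableEq V] (G : SimpleGraph V) [DecidableRel G.Adj]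
    (v : V) (S : Finset V) : ℕ :=
  ((G.cliqueFinset 3).filter (fun t => v ∈ t ∧ t ⊆ S)).card

/-- `S` is a vertex-ℓ-triangle 2-club. -/
def IsVertexTriangleTwoClub [Fintype V] [DecidableEq V] (G : SimpleGraph V)
    [DecidableRel G.Adj] (ℓ : ℕ) (S : Finset V) : Prop :=
  IsTwoClub G S ∧ ∀ v ∈ S, ℓ ≤ triCountIn G v S

/-- One step of the deletion procedure: delete a vertex lying in fewer than `ℓ`
triangles of the current induced graph. -/
inductive DelStep [Fintype V] [DecidableEq V] (G : SimpleGraph V) [DecidableRel G.Adj]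
    (ℓ : ℕ) : Finset V → Finset V → Prop
  | step (T : Finset V) (w : V) (hw : w ∈ T) (hbad : triCountIn G w T < ℓ) :
      DelStep G ℓ T (T.erase w)

lemma triCountIn_mono [Fintype V] [DecidableEq V] (G : SimpleGraph V) [DecidableRel G.Adj]
    (v : V) {S T : Finset V} (h : S ⊆ T) : triCountIn G v S ≤ triCountIn G v T := by
  apply Finset.card_le_card
  intro t ht
  simp only [Finset.mem_filter] at ht ⊢
  exact ⟨ht.1, ht.2.1, ht.2.2.trans h⟩

/-- If `S` is a vertex-ℓ-triangle 2-club contained in `N[v]` with `v ∈ S`, then the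
iterative deletion procedure started on `N[v]` never deletes a vertex of `S`. -/
theorem stmt_14 [Fintype V] [DecidableEq V] (G : SimpleGraph V) [DecidableRel G.Adj]
    (ℓ : ℕ) (v : V) (S : Finset V)
    (hS : IsVertexTriangleTwoClub G ℓ S)
    (hSsub : S ⊆ insert v (G.neighborFinset v)) (hvS : v ∈ S) :
    ∀ T : Finset V,
      Relation.ReflTransGen (DelStep G ℓ) (insert v (G.neighborFinset v)) T → S ⊆ T := by
  intro T h
  induction h with
  | refl => exact hSsub
  | @tail T1 T2 _ hstep ih =>
    cases hstep with
    | step w hw hbad =>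
      have hwS : w ∉ S := by
        intro hwS
        have h1 : triCountIn G w S ≤ triCountIn G w T1 := triCountIn_mono G w ih
        have := hS.2 w hwS
        omega
      intro x hx
      exact Finset.mem_erase.2 ⟨fun he => hwS (he ▸ hx), ih hx⟩
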